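/- (Main theorem, non-convex case.) Suppose every device loss f_{i,j} is differentiable with L_f-Lipschitz gradient (not necessarily convex), and suppose γ > 2λ > 4L_f ≥ 0 (so that the server objective φ is differentiable with γ-Lipschitz gradient). Let the step sizes satisfy 0 < α_{i,j} ≤ 1/λ, 0 < η_i ≤ 1/(λ + γ), and 0 < β ≤ 1/(4γ), and let x* be a global minimizer of φ with φ(x⁰) > φ(x*). Then for every T ≥ 1 there exist numbers of inner iterations K, L ∈ ℕ such that the PerMFL iterates satisfy (1/T) ∑_{t=0}^{T−1} ‖∇φ(x^t)‖² ≤ 4 ( φ(x⁰) − φ(x*) ) / (βT); in particular, a point x^{t̃} chosen uniformly at random from {x⁰, …, x^{T−1}} satisfies E[‖∇φ(x^{t̃})‖²] ≤ 4 ( φ(x⁰) − φ(x*) ) / (βT). -/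

import Mathlib

noncomputable section

/-- Moreau envelope of `g : E → ℝ` with parameter `σ`. -/
def moreauEnv {E : Type*} [NormedAddCommGroup E] (g : E → ℝ) (σ : ℝ) (x : E) : ℝ :=
  ⨅ u : E, (g u + σ / 2 * ‖u - x‖ ^ 2)

variable {E : Type*} [NormedAddCommGroup E] [InnerProductSpace ℝ E] [FiniteDimensional ℝ E]

/-- PerMFL client-level (device) iterates: `θ⁰ = w`,
`θ^{l+1} = θˡ − α(∇g(θˡ) + λ(θˡ − w))`. -/
def clientSeq (g : E → ℝ) (α lam : ℝ) (w : E) : ℕ → E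
  | 0 => w
  | l + 1 =>
      clientSeq g α lam w l
        - α • (gradient g (clientSeq g α lam w l)
                + lam • (clientSeq g α lam w l - w))

/-- PerMFL team-level iterates for a team with `N` devices: `w⁰ = xt`,
`w^{k+1} = (1 − η(λ+γ))wᵏ + ηγ·xt + (λη/N)∑ⱼ θⱼ^{k,L}`. -/
def teamSeq {N : ℕ} (f : Fin N → E → ℝ) (α : Fin N → ℝ) (lam gam η : ℝ)
    (L : ℕ) (xt : E) : ℕ → E
  | 0 => xt
  | k + 1 =>
      (1 - η * (lam + gam)) • teamSeq f α lam gam η L xt k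
        + (η * gam) • xt
        + ((lam * η) / (N : ℝ)) •
            ∑ j : Fin N, clientSeq (f j) (α j) lam (teamSeq f α lam gam η L xt k) L

/-- PerMFL server-level (global) iterates: `x⁰ = x0`,
`x^{t+1} = (1 − βγ)xᵗ + (βγ/M)∑ᵢ wᵢ^{t,K}`. -/
def serverSeq {M : ℕ} {N : Fin M → ℕ} (f : (i : Fin M) → Fin (N i) → E → ℝ)
    (α : (i : Fin M) → Fin (N i) → ℝ) (η : Fin M → ℝ) (lam gam β : ℝ)
    (K L : ℕ) (x0 : E) : ℕ → E
  | 0 => x0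
  | t + 1 =>
      (1 - β * gam) • serverSeq f α η lam gam β K L x0 t
        + ((β * gam) / (M : ℝ)) •
            ∑ i : Fin M,
              teamSeq (f i) (α i) lam gam (η i) L (serverSeq f α η lam gam β K L x0 t) K

set_option maxHeartbeats 1000000

open Filter Topology intervalIntegral
open scoped NNReal

local notation "⟪" x ", " y "⟫" => @inner ℝ _ _ x y

/-- exact gradient-descent sequence -/
def pmGD (g : E → E) (β : ℝ) (x0 : E) : ℕ → E
  | 0 => x0
  | t + 1 => pmGD g β x0 t - β • g (pmGD g β x0 t)

lemma pm_hasGradientAt_of_quad (F : E → ℝ) (g x : E) (C : ℝ) (hC : 0 ≤ C)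
    (h : ∀ y, |F y - F x - ⟪g, y - x⟫| ≤ C * ‖y - x‖ ^ 2) : HasGradientAt F g x := by
  rw [hasGradientAt_iff_isLittleO, Asymptotics.isLittleO_iff]
  intro c hc
  have hev : ∀ᶠ y in 𝓝 x, ‖y - x‖ ≤ c / (C + 1) := by
    have : Metric.closedBall x (c / (C+1)) ∈ 𝓝 x :=
      Metric.closedBall_mem_nhds x (by positivity)
    filter_upwards [this] with y hy
    simpa [Metric.mem_closedBall, dist_eq_norm] using hy
  filter_upwards [hev] with y hy
  have h1 := h y
  have h2 : 0 ≤ ‖y - x‖ := norm_nonneg _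
  have h3 : C * ‖y - x‖ ^ 2 ≤ c * ‖y - x‖ := by
    have : C * ‖y - x‖ ≤ c := by
      rcases le_or_gt (C) 0 with hC0 | hC0
      · nlinarith
      · have := mul_le_mul_of_nonneg_left hy hC0.le
        calc C * ‖y-x‖ ≤ C * (c / (C+1)) := this
          _ ≤ c := by rw [div_eq_inv_mul]; rw [← mul_assoc]; nlinarith [mul_pos hc (by positivity : (0:ℝ) < (C+1)⁻¹), inv_nonneg.2 (by positivity : (0:ℝ) ≤ C+1), mul_inv_cancel₀ (by positivity : (C+1) ≠ 0)]
    nlinarith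
  calc ‖F y - F x - ⟪g, y - x⟫‖ = |F y - F x - ⟪g, y - x⟫| := Real.norm_eq_abs _
    _ ≤ C * ‖y - x‖ ^ 2 := h1
    _ ≤ c * ‖y - x‖ := h3

lemma pm_hasGradientAt_quad (c : ℝ) (hc : 0 ≤ c) (w x : E) :
    HasGradientAt (fun u => c * ‖u - w‖ ^ 2) ((2*c) • (x - w)) x := by
  apply pm_hasGradientAt_of_quad _ _ _ c hc
  intro y
  have hid : ‖y - w‖ ^ 2 = ‖x - w‖^2 + 2 * ⟪x - w, y - x⟫ + ‖y - x‖^2 := by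
    have := norm_add_sq_real (x - w) (y - x)
    rw [show x - w + (y - x) = y - w by abel] at this
    linarith
  have hin : ⟪(2*c) • (x - w), y - x⟫ = 2*c*⟪x - w, y - x⟫ := real_inner_smul_left _ _ _
  rw [hin]
  have : c * ‖y - w‖ ^ 2 - c * ‖x - w‖ ^ 2 - 2*c*⟪x - w, y - x⟫ = c * ‖y - x‖^2 := by
    rw [hid]; ring
  rw [this, abs_of_nonneg (by positivity)]

lemma pm_hasGradientAt_add {F₁ F₂ : E → ℝ} {g₁ g₂ x : E}
    (h₁ : HasGradientAt F₁ g₁ x) (h₂ : HasGradientAt F₂ g₂ x) :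
    HasGradientAt (fun y => F₁ y + F₂ y) (g₁ + g₂) x := by
  rw [hasGradientAt_iff_hasFDerivAt] at *
  simpa [map_add] using h₁.fun_add h₂

lemma pm_hasGradientAt_const_mul {F : E → ℝ} {g x : E} (c : ℝ)
    (h : HasGradientAt F g x) :
    HasGradientAt (fun y => c * F y) (c • g) x := by
  rw [hasGradientAt_iff_hasFDerivAt] at *
  simpa [map_smul] using h.const_mul c

lemma pm_hasGradientAt_sum {ι : Type*} (s : Finset ι) (F : ι → E → ℝ) (g : ι → E) (x : E)
    (h : ∀ i ∈ s, HasGradientAt (F i) (g i) x) :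
    HasGradientAt (fun y => ∑ i ∈ s, F i y) (∑ i ∈ s, g i) x := by
  rw [hasGradientAt_iff_hasFDerivAt]
  have := HasFDerivAt.fun_sum (fun i hi => (h i hi).hasFDerivAt)
  simpa [map_sum] using this

lemma pm_seg_integral (F : E → ℝ) (G : E → E) (hF : ∀ p, HasGradientAt F (G p) p)
    (hGc : Continuous G) (x v : E) :
    F (x + v) - F x = ∫ t in (0:ℝ)..1, ⟪G (x + t • v), v⟫ := by
  have hline : ∀ t : ℝ, HasDerivAt (fun s : ℝ => x + s • v) v t := by
    intro t
    simpa using ((hasDerivAt_id t).smul_const v).const_add x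
  have hd : ∀ t : ℝ, HasDerivAt (fun s : ℝ => F (x + s • v)) ⟪G (x + t • v), v⟫ t := by
    intro t
    have h1 := (hF (x + t • v)).hasFDerivAt.comp_hasDerivAt t (hline t)
    simpa [InnerProductSpace.toDual_apply_apply, Function.comp_def] using h1
  have hcont : Continuous fun t : ℝ => ⟪G (x + t • v), v⟫ := by
    apply Continuous.inner
    · exact hGc.comp (by continuity)
    · exact continuous_const
  have := intervalIntegral.integral_eq_sub_of_hasDerivAt
    (f := fun s : ℝ => F (x + s • v)) (fun t _ => hd t)
    (hcont.intervalIntegrable 0 1)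
  simp only [zero_smul, add_zero, one_smul] at this
  linarith [this]

lemma pm_upper_quad (F : E → ℝ) (G : E → E) (hF : ∀ p, HasGradientAt F (G p) p)
    (hGc : Continuous G) (L : ℝ) (hL : 0 ≤ L)
    (hlip : ∀ p q, ‖G p - G q‖ ≤ L * ‖p - q‖) :
    ∀ x y : E, F y ≤ F x + ⟪G x, y - x⟫ + L / 2 * ‖y - x‖ ^ 2 := by
  intro x y
  set v := y - x with hv
  have hseg := pm_seg_integral F G hF hGc x v
  have hxy : x + v = y := by rw [hv]; abel
  rw [hxy] at hseg
  have hmono : (∫ t in (0:ℝ)..1, ⟪G (x + t • v), v⟫) ≤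
      ∫ t in (0:ℝ)..1, (⟪G x, v⟫ + L * t * ‖v‖^2) := by
    apply intervalIntegral.integral_mono_on (by norm_num)
    · exact ((Continuous.inner (hGc.comp (by continuity)) continuous_const)).intervalIntegrable 0 1
    · exact (by continuity : Continuous fun t : ℝ => ⟪G x, v⟫ + L * t * ‖v‖^2).intervalIntegrable 0 1
    · intro t ht
      rcases ht with ⟨ht0, ht1⟩
      have h1 : ⟪G (x + t • v) - G x, v⟫ ≤ ‖G (x + t • v) - G x‖ * ‖v‖ :=
        real_inner_le_norm _ _
      have h2 : ‖G (x + t • v) - G x‖ ≤ L * (t * ‖v‖) := by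
        have := hlip (x + t • v) x
        simpa [norm_smul, abs_of_nonneg ht0] using this
      have h3 : ⟪G (x + t • v), v⟫ = ⟪G x, v⟫ + ⟪G (x + t • v) - G x, v⟫ := by
        rw [inner_sub_left]; ring
      have h4 : ‖G (x + t • v) - G x‖ * ‖v‖ ≤ L * t * ‖v‖^2 := by
        have := mul_le_mul_of_nonneg_right h2 (norm_nonneg v)
        calc ‖G (x + t • v) - G x‖ * ‖v‖ ≤ L * (t * ‖v‖) * ‖v‖ := this
          _ = L * t * ‖v‖^2 := by ring
      linarith
  have hint : (∫ t in (0:ℝ)..1, (⟪G x, v⟫ + L * t * ‖v‖^2)) = ⟪G x, v⟫ + L/2 * ‖v‖^2 := by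
    rw [intervalIntegral.integral_add]
    · rw [intervalIntegral.integral_const]
      have : (∫ t in (0:ℝ)..1, L * t * ‖v‖^2) = L * ‖v‖^2 * ∫ t in (0:ℝ)..1, t := by
        rw [← intervalIntegral.integral_const_mul]
        congr 1; ext t; ring
      rw [this, integral_id]
      norm_num; ring
    · exact intervalIntegrable_const
    · exact (by continuity : Continuous fun t : ℝ => L * t * ‖v‖^2).intervalIntegrable 0 1
  rw [hint] at hmono
  linarith

lemma pm_strong_lower (F : E → ℝ) (G : E → E) (hF : ∀ p, HasGradientAt F (G p) p)
    (hGc : Continuous G) (μ : ℝ)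
    (hmono : ∀ p q, μ * ‖p - q‖ ^ 2 ≤ ⟪G p - G q, p - q⟫) :
    ∀ x y : E, F x + ⟪G x, y - x⟫ + μ / 2 * ‖y - x‖ ^ 2 ≤ F y := by
  intro x y
  set v := y - x with hv
  have hseg := pm_seg_integral F G hF hGc x v
  have hxy : x + v = y := by rw [hv]; abel
  rw [hxy] at hseg
  have hmono2 : (∫ t in (0:ℝ)..1, (⟪G x, v⟫ + μ * t * ‖v‖^2)) ≤
      ∫ t in (0:ℝ)..1, ⟪G (x + t • v), v⟫ := by
    apply intervalIntegral.integral_mono_on (by norm_num)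
    · exact (by continuity : Continuous fun t : ℝ => ⟪G x, v⟫ + μ * t * ‖v‖^2).intervalIntegrable 0 1
    · exact ((Continuous.inner (hGc.comp (by continuity)) continuous_const)).intervalIntegrable 0 1
    · intro t ht
      rcases ht with ⟨ht0, ht1⟩
      have h3 : ⟪G (x + t • v), v⟫ = ⟪G x, v⟫ + ⟪G (x + t • v) - G x, v⟫ := by
        rw [inner_sub_left]; ring
      rcases eq_or_lt_of_le ht0 with h | h
      · simp [← h]
      · have h5 := hmono (x + t • v) x
        have h6 : (x + t • v) - x = t • v := by abel
        rw [h6] at h5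
        have h7 : ⟪G (x + t • v) - G x, t • v⟫ = t * ⟪G (x + t • v) - G x, v⟫ :=
          real_inner_smul_right _ _ _
        rw [h7] at h5
        have h8 : μ * ‖t • v‖^2 = t * (μ * t * ‖v‖^2) := by
          rw [norm_smul, Real.norm_eq_abs, abs_of_nonneg ht0]; ring
        rw [h8] at h5
        have := (mul_le_mul_iff_right₀ h).1 h5
        linarith
  have hint : (∫ t in (0:ℝ)..1, (⟪G x, v⟫ + μ * t * ‖v‖^2)) = ⟪G x, v⟫ + μ/2 * ‖v‖^2 := by
    rw [intervalIntegral.integral_add]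
    · rw [intervalIntegral.integral_const]
      have : (∫ t in (0:ℝ)..1, μ * t * ‖v‖^2) = μ * ‖v‖^2 * ∫ t in (0:ℝ)..1, t := by
        rw [← intervalIntegral.integral_const_mul]
        congr 1; ext t; ring
      rw [this, integral_id]
      norm_num; ring
    · exact intervalIntegrable_const
    · exact (by continuity : Continuous fun t : ℝ => μ * t * ‖v‖^2).intervalIntegrable 0 1
  rw [hint] at hmono2
  linarith

lemma pm_coco (H : E → ℝ) (G : E → E) (L : ℝ) (hL : 0 < L)
    (hub : ∀ x y : E, H y ≤ H x + ⟪G x, y - x⟫ + L / 2 * ‖y - x‖ ^ 2)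
    (hlb : ∀ x y : E, H x + ⟪G x, y - x⟫ ≤ H y) :
    ∀ x y : E, (1 / L) * ‖G x - G y‖ ^ 2 ≤ ⟪G x - G y, x - y⟫ := by
  have key : ∀ x y : E, H y + ⟪G y, x - y⟫ + (1/(2*L)) * ‖G y - G x‖^2 ≤ H x := by
    intro x y
    set z := x + (1/L) • (G y - G x) with hz
    have h1 := hlb y z
    have h2 := hub x z
    have hzx : z - x = (1/L) • (G y - G x) := by rw [hz]; abel
    have hzy : z - y = (x - y) + (1/L) • (G y - G x) := by rw [hz]; abel
    have e1 : ⟪G y, z - y⟫ = ⟪G y, x - y⟫ + (1/L) * ⟪G y, G y - G x⟫ := by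
      rw [hzy, inner_add_right, real_inner_smul_right]
    have e2 : ⟪G x, z - x⟫ = (1/L) * ⟪G x, G y - G x⟫ := by
      rw [hzx, real_inner_smul_right]
    have e3 : ‖z - x‖^2 = (1/L)^2 * ‖G y - G x‖^2 := by
      rw [hzx, norm_smul, Real.norm_eq_abs]
      rw [abs_of_nonneg (by positivity : (0:ℝ) ≤ 1/L)]; ring
    have e4 : (1/L) * ⟪G y, G y - G x⟫ - (1/L) * ⟪G x, G y - G x⟫ = (1/L) * ‖G y - G x‖^2 := by
      rw [← mul_sub, ← inner_sub_left, real_inner_self_eq_norm_sq]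
    have hL2 : L/2 * ((1/L)^2 * ‖G y - G x‖^2) = (1/(2*L)) * ‖G y - G x‖^2 := by
      field_simp
    have hhalf : (1/L) * ‖G y - G x‖^2 =
        (1/(2*L)) * ‖G y - G x‖^2 + (1/(2*L)) * ‖G y - G x‖^2 := by
      field_simp; ring
    rw [e1] at h1
    rw [e2, e3, hL2] at h2
    linarith [h1, h2, e4, hhalf]
  intro x y
  have k1 := key x y
  have k2 := key y x
  have hsym2 : ‖G y - G x‖^2 = ‖G x - G y‖^2 := by rw [norm_sub_rev]
  have i1 : ⟪G y, x - y⟫ + ⟪G x, y - x⟫ = -⟪G x - G y, x - y⟫ := by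
    rw [inner_sub_left]
    have e5 : ⟪G y, x - y⟫ = -⟪G y, y - x⟫ := by
      rw [← inner_neg_right]; congr 1; abel
    have e6 : ⟪G x, y - x⟫ = -⟪G x, x - y⟫ := by
      rw [← inner_neg_right]; congr 1; abel
    rw [e5, e6]; ring
  rw [hsym2] at k1
  have hLL2 : (1:ℝ)/(2*L) * ‖G x - G y‖^2 + 1/(2*L) * ‖G x - G y‖^2
      = 1/L * ‖G x - G y‖^2 := by
    rw [← add_mul]
    congr 1
    rw [← add_div]
    rw [show (1:ℝ)+1 = 2 by norm_num]
    rw [div_eq_div_iff (by linarith : (0:ℝ) < 2*L).ne' hL.ne']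
    ring
  linarith [k1, k2, i1, hLL2]

/-- contraction of the gradient step. -/

lemma pm_step_contract (F : E → ℝ) (G : E → E) (lam Lf : ℝ)
    (hLf : 0 < Lf) (hlam : 2 * Lf < lam)
    (hub : ∀ x y : E, F y ≤ F x + ⟪G x, y - x⟫ + (lam + Lf) / 2 * ‖y - x‖ ^ 2)
    (hslb : ∀ x y : E, F x + ⟪G x, y - x⟫ + (lam - Lf) / 2 * ‖y - x‖ ^ 2 ≤ F y)
    (α : ℝ) (hα0 : 0 < α) (hα1 : α * lam ≤ 1) :
    ∀ x y : E, ‖(x - α • G x) - (y - α • G y)‖ ^ 2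
      ≤ (1 - α * (lam^2 - Lf^2) / lam) * ‖x - y‖ ^ 2 := by
  have hnid : ∀ x y : E, ‖y‖^2 = ‖x‖^2 + 2*⟪x, y - x⟫ + ‖y - x‖^2 := by
    intro x y
    have := norm_add_sq_real x (y - x)
    rw [show x + (y - x) = y by abel] at this
    linarith
  have hinH : ∀ x y : E, ⟪G x - (lam - Lf) • x, y - x⟫
      = ⟪G x, y - x⟫ - (lam - Lf) * ⟪x, y - x⟫ := by
    intro x y
    rw [inner_sub_left, real_inner_smul_left]
  have hsc : ∀ x y : E, (lam - Lf)/2 * ‖y‖^2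
      = (lam - Lf)/2 * ‖x‖^2 + (lam - Lf)*⟪x, y - x⟫ + (lam - Lf)/2 * ‖y - x‖^2 := by
    intro x y
    rw [hnid x y]; ring
  have hubH : ∀ x y : E, (F y - (lam - Lf)/2 * ‖y‖^2)
      ≤ (F x - (lam - Lf)/2 * ‖x‖^2) + ⟪G x - (lam - Lf) • x, y - x⟫
        + (2*Lf) / 2 * ‖y - x‖ ^ 2 := by
    intro x y
    rw [hinH]
    linarith [hub x y, hsc x y]
  have hlbH : ∀ x y : E, (F x - (lam - Lf)/2 * ‖x‖^2)
      + ⟪G x - (lam - Lf) • x, y - x⟫ ≤ (F y - (lam - Lf)/2 * ‖y‖^2) := by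
    intro x y
    rw [hinH]
    linarith [hslb x y, hsc x y]
  have hcoco := pm_coco (fun u => F u - (lam - Lf)/2 * ‖u‖^2)
      (fun u => G u - (lam - Lf) • u) (2*Lf) (by linarith) hubH hlbH
  intro x y
  have hc := hcoco x y
  have hGHd : (G x - (lam - Lf) • x) - (G y - (lam - Lf) • y)
      = (G x - G y) - (lam - Lf) • (x - y) := by
    rw [smul_sub]; abel
  rw [hGHd] at hc
  set D := G x - G y with hD
  set Δ := x - y with hΔ
  have hexp : ‖D - (lam - Lf) • Δ‖^2 = ‖D‖^2 - 2*(lam - Lf)*⟪D, Δ⟫ + (lam - Lf)^2 * ‖Δ‖^2 := by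
    rw [norm_sub_sq_real, real_inner_smul_right, norm_smul, Real.norm_eq_abs]
    rw [abs_of_nonneg (by linarith : (0:ℝ) ≤ lam - Lf)]
    ring
  have hinGH : ⟪D - (lam - Lf) • Δ, Δ⟫ = ⟪D, Δ⟫ - (lam - Lf) * ‖Δ‖^2 := by
    rw [inner_sub_left, real_inner_smul_left, real_inner_self_eq_norm_sq]
  rw [hexp, hinGH] at hc
  have h2L : (0:ℝ) < 2*Lf := by linarith
  have h6 : ‖D‖^2 - 2*(lam - Lf)*⟪D, Δ⟫ + (lam - Lf)^2 * ‖Δ‖^2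
      ≤ 2*Lf*(⟪D, Δ⟫ - (lam - Lf) * ‖Δ‖^2) := by
    have h7 := mul_le_mul_of_nonneg_left hc h2L.le
    have hdd : (2*Lf) * (1/(2*Lf) * (‖D‖^2 - 2*(lam - Lf)*⟪D, Δ⟫ + (lam - Lf)^2 * ‖Δ‖^2))
        = ‖D‖^2 - 2*(lam - Lf)*⟪D, Δ⟫ + (lam - Lf)^2 * ‖Δ‖^2 := by
      field_simp
    rw [hdd] at h7
    linarith
  have hkey : ‖D‖^2 ≤ 2*lam*⟪D, Δ⟫ - (lam^2 - Lf^2)*‖Δ‖^2 := by nlinarith [h6]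
  clear hc h6 hcoco
  have hgoal : ‖Δ - α • D‖^2 = ‖Δ‖^2 - 2*α*⟪D, Δ⟫ + α^2 * ‖D‖^2 := by
    rw [norm_sub_sq_real, real_inner_smul_right, norm_smul, Real.norm_eq_abs,
      abs_of_nonneg hα0.le, real_inner_comm]
    ring
  have hxy : (x - α • G x) - (y - α • G y) = Δ - α • D := by
    simp only [hD, hΔ, smul_sub]; abel
  rw [hxy, hgoal]
  have hD0 : 0 ≤ ‖D‖^2 := by positivity
  have hΔ0 : 0 ≤ ‖Δ‖^2 := by positivity
  have hlam0 : 0 < lam := by linarith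
  have hc0 : (lam^2 - Lf^2)*‖Δ‖^2 ≤ 2*lam*⟪D, Δ⟫ := by nlinarith [hkey, hD0]
  have hdiveq : α * (lam^2 - Lf^2) / lam * lam = α * (lam^2 - Lf^2) := by
    field_simp
  have hmain : 0 ≤ α*(1 - α*lam)*(2*lam*⟪D, Δ⟫ - (lam^2 - Lf^2)*‖Δ‖^2) :=
    mul_nonneg (mul_nonneg hα0.le (by linarith)) (by linarith [hc0])
  have G1 : α^2*lam*‖D‖^2 ≤ α^2*lam*(2*lam*⟪D, Δ⟫ - (lam^2 - Lf^2)*‖Δ‖^2) :=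
    mul_le_mul_of_nonneg_left hkey (by positivity)
  have hfinal : (‖Δ‖^2 - 2*α*⟪D, Δ⟫ + α^2*‖D‖^2) * lam
      ≤ ((1 - α * (lam^2 - Lf^2) / lam) * ‖Δ‖^2) * lam := by
    have hexpand : ((1 - α * (lam^2 - Lf^2) / lam) * ‖Δ‖^2) * lam
        = ‖Δ‖^2 * lam - (α * (lam^2 - Lf^2) / lam * lam) * ‖Δ‖^2 := by ring
    rw [hexpand, hdiveq]
    nlinarith [hmain, G1]
  exact le_of_mul_le_mul_right hfinal hlam0

lemma pm_rec_bound (e : ℕ → ℝ) (ρ d : ℝ) (hρ0 : 0 ≤ ρ) (hρ1 : ρ < 1) (hd : 0 ≤ d)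
    (h : ∀ k, e (k+1) ≤ ρ * e k + d) :
    ∀ k, e k ≤ ρ^k * e 0 + d / (1 - ρ) := by
  have h1ρ : (0:ℝ) < 1 - ρ := by linarith
  intro k
  induction k with
  | zero =>
    simp only [pow_zero, one_mul]
    have : 0 ≤ d / (1 - ρ) := div_nonneg hd h1ρ.le
    linarith
  | succ k ih =>
    have h1 := h k
    have h2 : ρ * e k ≤ ρ * (ρ^k * e 0 + d / (1-ρ)) := mul_le_mul_of_nonneg_left ih hρ0
    have h4 : ρ * (d/(1-ρ)) + d = d / (1-ρ) := by
      field_simp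
      ring
    calc e (k+1) ≤ ρ * e k + d := h1
      _ ≤ ρ * (ρ^k * e 0 + d / (1-ρ)) + d := by linarith
      _ = ρ^(k+1) * e 0 + (ρ * (d/(1-ρ)) + d) := by ring
      _ = ρ^(k+1) * e 0 + d/(1-ρ) := by rw [h4]

lemma pm_envelope (g : E → ℝ) (σ : ℝ) (p : E → E)
    (hmin : ∀ x u, g (p x) + σ/2 * ‖p x - x‖^2 ≤ g u + σ/2 * ‖u - x‖^2) :
    (∀ x, moreauEnv g σ x = g (p x) + σ/2 * ‖p x - x‖^2) ∧
    (∀ x y, moreauEnv g σ y ≤ moreauEnv g σ x + σ * ⟪x - p x, y - x⟫ + σ/2 * ‖y - x‖^2) := by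
  have hbdd : ∀ x : E, BddBelow (Set.range fun u => g u + σ/2 * ‖u - x‖^2) := by
    intro x
    refine ⟨g (p x) + σ/2 * ‖p x - x‖^2, ?_⟩
    rintro v ⟨u, rfl⟩
    exact hmin x u
  have hval : ∀ x, moreauEnv g σ x = g (p x) + σ/2 * ‖p x - x‖^2 := by
    intro x
    apply le_antisymm
    · exact ciInf_le (hbdd x) (p x)
    · exact le_ciInf (hmin x)
  refine ⟨hval, fun x y => ?_⟩
  have h1 : moreauEnv g σ y ≤ g (p x) + σ/2 * ‖p x - y‖^2 := ciInf_le (hbdd y) (p x)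
  have hid : ‖p x - y‖^2 = ‖p x - x‖^2 + 2*⟪p x - x, x - y⟫ + ‖x - y‖^2 := by
    have := norm_add_sq_real (p x - x) (x - y)
    rw [show (p x - x) + (x - y) = p x - y by abel] at this
    linarith
  have hsw : ⟪p x - x, x - y⟫ = ⟪x - p x, y - x⟫ := by
    rw [show p x - x = -(x - p x) by abel, show x - y = -(y - x) by abel, inner_neg_neg]
  have hnn : ‖x - y‖ = ‖y - x‖ := norm_sub_rev _ _
  rw [hval x]
  rw [hid, hsw, hnn] at h1
  linarith

lemma pm_danskin (F : E → ℝ) (σ : ℝ) (hσ : 0 < σ) (p : E → E) (ℓ : ℝ) (hℓ : 0 ≤ ℓ)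
    (hp : ∀ x y, ‖p x - p y‖ ≤ ℓ * ‖x - y‖)
    (hq : ∀ x y, F y ≤ F x + σ * ⟪x - p x, y - x⟫ + σ/2 * ‖y - x‖^2) :
    ∀ x, HasGradientAt F (σ • (x - p x)) x := by
  intro x
  apply pm_hasGradientAt_of_quad F _ x (σ/2 + σ*(1+ℓ)) (by positivity)
  intro y
  have e1 : ⟪σ • (x - p x), y - x⟫ = σ * ⟪x - p x, y - x⟫ := real_inner_smul_left _ _ _
  rw [e1]
  have hup := hq x y
  have hlo := hq y x
  have e2 : ⟪y - p y, x - y⟫ = -⟪y - p y, y - x⟫ := by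
    rw [← inner_neg_right]; congr 1; abel
  have e3 : ⟪y - p y, y - x⟫ - ⟪x - p x, y - x⟫ = ⟪(y - p y) - (x - p x), y - x⟫ :=
    (inner_sub_left _ _ _).symm
  have e4 : -(‖(y - p y) - (x - p x)‖ * ‖y - x‖) ≤ ⟪(y - p y) - (x - p x), y - x⟫ := by
    have h := abs_real_inner_le_norm ((y - p y) - (x - p x)) (y - x)
    rw [abs_le] at h
    linarith [h.1]
  have e5 : ‖(y - p y) - (x - p x)‖ ≤ (1 + ℓ) * ‖y - x‖ := by
    rw [show (y - p y) - (x - p x) = (y - x) - (p y - p x) by abel]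
    calc ‖(y - x) - (p y - p x)‖ ≤ ‖y - x‖ + ‖p y - p x‖ := norm_sub_le _ _
      _ ≤ ‖y - x‖ + ℓ * ‖y - x‖ := by linarith [hp y x]
      _ = (1 + ℓ) * ‖y - x‖ := by ring
  have e6 : ‖(y - p y) - (x - p x)‖ * ‖y - x‖ ≤ (1 + ℓ) * ‖y - x‖^2 := by
    have := mul_le_mul_of_nonneg_right e5 (norm_nonneg (y - x))
    calc ‖(y - p y) - (x - p x)‖ * ‖y - x‖ ≤ ((1+ℓ) * ‖y - x‖) * ‖y - x‖ := this
      _ = (1 + ℓ) * ‖y - x‖^2 := by ring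
  have e7 : -((1 + ℓ) * ‖y - x‖^2) ≤ ⟪(y - p y) - (x - p x), y - x⟫ := by linarith
  have hnn : ‖x - y‖^2 = ‖y - x‖^2 := by rw [norm_sub_rev]
  rw [abs_le]
  refine ⟨?_, by
    nlinarith [hup, mul_nonneg (mul_nonneg hσ.le (by linarith : (0:ℝ) ≤ 1 + ℓ))
      (sq_nonneg ‖y - x‖)]⟩
  · -- lower bound
    rw [e2] at hlo
    -- hlo : F x ≤ F y + σ * (-⟪y - p y, y - x⟫) + σ/2 * ‖x - y‖^2
    have e8 : σ * ⟪(y - p y) - (x - p x), y - x⟫ ≥ -(σ * ((1 + ℓ) * ‖y - x‖^2)) := by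
      have := mul_le_mul_of_nonneg_left e7 hσ.le
      linarith [this]
    have e9 : σ * ⟪y - p y, y - x⟫ - σ * ⟪x - p x, y - x⟫
        = σ * ⟪(y - p y) - (x - p x), y - x⟫ := by rw [← e3]; ring
    nlinarith [hlo, e8, e9, hnn, hσ.le]

lemma pm_device (f : E → ℝ) (Lf lam : ℝ) (hLf : 0 < Lf) (hlam : 2*Lf < lam)
    (hdf : Differentiable ℝ f)
    (hlip : ∀ x y : E, ‖gradient f x - gradient f y‖ ≤ Lf * ‖x - y‖) :
    ∃ p : E → E,
      (∀ w, gradient f (p w) + lam • (p w - w) = 0) ∧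
      (∀ w w', ‖p w - p w'‖ ≤ (lam/(lam - Lf)) * ‖w - w'‖) ∧
      (∀ w u, f (p w) + lam/2 * ‖p w - w‖^2 ≤ f u + lam/2 * ‖u - w‖^2) ∧
      (∀ α, 0 < α → α * lam ≤ 1 → ∀ w l,
        ‖clientSeq f α lam w l - p w‖
          ≤ (Real.sqrt (1 - α * (lam^2 - Lf^2)/lam))^l * ‖w - p w‖) := by
  have hlam0 : (0:ℝ) < lam := by linarith
  have hμ : (0:ℝ) < lam - Lf := by linarith
  -- the gradient of the proximal objective
  set G : E → E → E := fun w θ => gradient f θ + lam • (θ - w) with hG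
  have hgradf : ∀ θ, HasGradientAt f (gradient f θ) θ := fun θ =>
    (hdf θ).hasGradientAt
  have hGrad : ∀ w θ, HasGradientAt (fun u => f u + lam/2 * ‖u - w‖^2) (G w θ) θ := by
    intro w θ
    have h2 := pm_hasGradientAt_quad (lam/2) (by linarith) w θ
    have h3 := pm_hasGradientAt_add (hgradf θ) h2
    have : (2*(lam/2)) • (θ - w) = lam • (θ - w) := by
      congr 1; ring
    rw [this] at h3
    exact h3
  have hgc : Continuous (gradient f) := by
    have hl : LipschitzWith (Real.toNNReal Lf) (gradient f) := by
      apply LipschitzWith.of_dist_le_mul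
      intro x y
      rw [dist_eq_norm, dist_eq_norm, Real.coe_toNNReal _ hLf.le]
      exact hlip x y
    exact hl.continuous
  have hGc : ∀ w, Continuous (G w) := by
    intro w
    exact hgc.add ((continuous_id.sub continuous_const).const_smul lam)
  have hGlip : ∀ w, ∀ p q : E, ‖G w p - G w q‖ ≤ (lam + Lf) * ‖p - q‖ := by
    intro w p q
    have : G w p - G w q = (gradient f p - gradient f q) + lam • (p - q) := by
      simp only [hG, smul_sub]; abel
    rw [this]
    calc ‖(gradient f p - gradient f q) + lam • (p - q)‖
        ≤ ‖gradient f p - gradient f q‖ + ‖lam • (p - q)‖ := norm_add_le _ _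
      _ ≤ Lf * ‖p - q‖ + lam * ‖p - q‖ := by
          have := hlip p q
          rw [norm_smul, Real.norm_eq_abs, abs_of_pos hlam0]
          linarith
      _ = (lam + Lf) * ‖p - q‖ := by ring
  have hGmono : ∀ w, ∀ p q : E, (lam - Lf) * ‖p - q‖^2 ≤ ⟪G w p - G w q, p - q⟫ := by
    intro w p q
    have e1 : G w p - G w q = (gradient f p - gradient f q) + lam • (p - q) := by
      simp only [hG, smul_sub]; abel
    rw [e1, inner_add_left, real_inner_smul_left, real_inner_self_eq_norm_sq]
    have h2 := abs_real_inner_le_norm (gradient f p - gradient f q) (p - q)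
    rw [abs_le] at h2
    have h3 : ‖gradient f p - gradient f q‖ * ‖p - q‖ ≤ Lf * ‖p - q‖^2 := by
      have := mul_le_mul_of_nonneg_right (hlip p q) (norm_nonneg (p - q))
      calc ‖gradient f p - gradient f q‖ * ‖p - q‖ ≤ Lf * ‖p - q‖ * ‖p - q‖ := this
        _ = Lf * ‖p - q‖^2 := by ring
    nlinarith [h2.1]
  have hub : ∀ w, ∀ x y : E, (fun u => f u + lam/2 * ‖u - w‖^2) y
      ≤ (fun u => f u + lam/2 * ‖u - w‖^2) x + ⟪G w x, y - x⟫
        + (lam + Lf)/2 * ‖y - x‖^2 :=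
    fun w => pm_upper_quad _ (G w) (hGrad w) (hGc w) (lam + Lf) (by linarith) (hGlip w)
  have hslb : ∀ w, ∀ x y : E, (fun u => f u + lam/2 * ‖u - w‖^2) x + ⟪G w x, y - x⟫
      + (lam - Lf)/2 * ‖y - x‖^2 ≤ (fun u => f u + lam/2 * ‖u - w‖^2) y :=
    fun w => pm_strong_lower _ (G w) (hGrad w) (hGc w) (lam - Lf) (hGmono w)
  -- contraction of the gradient step, in norm
  have hs0 : ∀ α : ℝ, 0 < α → α * lam ≤ 1 → 0 ≤ 1 - α * (lam^2 - Lf^2)/lam := by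
    intro α hα0 hα1
    rw [sub_nonneg, div_le_one hlam0]
    nlinarith [sq_nonneg Lf, hα0.le, hα1, mul_le_mul_of_nonneg_left hα1 hlam0.le]
  have hcontr : ∀ α : ℝ, 0 < α → α * lam ≤ 1 → ∀ w u v : E,
      ‖(u - α • G w u) - (v - α • G w v)‖
        ≤ Real.sqrt (1 - α * (lam^2 - Lf^2)/lam) * ‖u - v‖ := by
    intro α hα0 hα1 w u v
    have h1 := pm_step_contract _ (G w) lam Lf hLf hlam (hub w) (hslb w) α hα0 hα1 u v
    have h2 := Real.sqrt_le_sqrt h1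
    rw [Real.sqrt_sq (norm_nonneg _)] at h2
    rw [Real.sqrt_mul (hs0 α hα0 hα1), Real.sqrt_sq (norm_nonneg _)] at h2
    exact h2
  -- existence of the fixed point, using α₀ = 1/lam
  have hα00 : (0:ℝ) < 1/lam := by positivity
  have hα01 : (1/lam) * lam ≤ 1 := by
    rw [one_div, inv_mul_cancel₀ hlam0.ne']
  set q0 : ℝ := Real.sqrt (1 - (1/lam) * (lam^2 - Lf^2)/lam) with hq0
  have hq0nonneg : 0 ≤ q0 := Real.sqrt_nonneg _
  have hq0lt : q0 < 1 := by
    rw [hq0]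
    have h1 : 1 - (1/lam) * (lam^2 - Lf^2)/lam < 1 := by
      have h2 : 0 < (1/lam) * (lam^2 - Lf^2)/lam := by
        apply div_pos
        apply mul_pos hα00
        nlinarith
        exact hlam0
      linarith
    calc Real.sqrt (1 - (1/lam) * (lam^2 - Lf^2)/lam) < Real.sqrt 1 := by
          apply Real.sqrt_lt_sqrt (hs0 _ hα00 hα01) h1
      _ = 1 := Real.sqrt_one
  have hcomplete : CompleteSpace E := FiniteDimensional.complete ℝ E
  have hne : Nonempty E := ⟨0⟩
  have hcw : ∀ w : E, ContractingWith (Real.toNNReal q0)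
      (fun u => u - (1/lam) • G w u) := by
    intro w
    constructor
    · have hcoe : ((Real.toNNReal q0 : ℝ≥0) : ℝ) < ((1 : ℝ≥0) : ℝ) := by
        rw [Real.coe_toNNReal _ hq0nonneg, NNReal.coe_one]
        exact hq0lt
      exact_mod_cast hcoe
    · apply LipschitzWith.of_dist_le_mul
      intro u v
      rw [dist_eq_norm, dist_eq_norm, Real.coe_toNNReal _ hq0nonneg]
      exact hcontr (1/lam) hα00 hα01 w u v
  set p : E → E := fun w =>
    ContractingWith.fixedPoint (fun u => u - (1/lam) • G w u) (hcw w) with hp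
  have hfix : ∀ w, p w - (1/lam) • G w (p w) = p w := by
    intro w
    have h1 := ContractingWith.fixedPoint_isFixedPt (hcw w)
    exact h1
  have heq : ∀ w, G w (p w) = 0 := by
    intro w
    have h1 := hfix w
    have h2 : (1/lam) • G w (p w) = 0 := by
      have := sub_eq_self.mp h1
      exact this
    rcases smul_eq_zero.mp h2 with h3 | h3
    · exact absurd h3 (by positivity : (0:ℝ) < 1/lam).ne'
    · exact h3
  refine ⟨p, heq, ?_, ?_, ?_⟩
  · -- Lipschitz of p
    intro w w'
    by_cases h0 : p w - p w' = 0
    · rw [h0, norm_zero]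
      positivity
    · have hΔp : 0 < ‖p w - p w'‖ := norm_pos_iff.mpr h0
      have e1 : gradient f (p w) = lam • (w - p w) := by
        have h1 := heq w
        have h2 : gradient f (p w) = -(lam • (p w - w)) := by
          rw [hG] at h1
          simp only [] at h1
          linear_combination (norm := module) h1
        rw [h2, ← smul_neg]
        congr 1
        abel
      have e2 : gradient f (p w') = lam • (w' - p w') := by
        have h1 := heq w'
        have h2 : gradient f (p w') = -(lam • (p w' - w')) := by
          rw [hG] at h1
          simp only [] at h1
          linear_combination (norm := module) h1
        rw [h2, ← smul_neg]
        congr 1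
        abel
      have h3 : -(Lf * (‖p w - p w'‖ * ‖p w - p w'‖))
          ≤ ⟪gradient f (p w) - gradient f (p w'), p w - p w'⟫ := by
        have ha := abs_real_inner_le_norm (gradient f (p w) - gradient f (p w')) (p w - p w')
        rw [abs_le] at ha
        have hb := mul_le_mul_of_nonneg_right (hlip (p w) (p w')) (norm_nonneg (p w - p w'))
        linarith [ha.1]
      have h4 : gradient f (p w) - gradient f (p w')
          = lam • ((w - w') - (p w - p w')) := by
        rw [e1, e2, ← smul_sub]
        congr 1
        abel
      rw [h4, real_inner_smul_left, inner_sub_left, real_inner_self_eq_norm_sq] at h3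
      have h5 : ⟪w - w', p w - p w'⟫ ≤ ‖w - w'‖ * ‖p w - p w'‖ := real_inner_le_norm _ _
      have h7 : (lam - Lf) * ‖p w - p w'‖^2 ≤ lam * (‖w - w'‖ * ‖p w - p w'‖) := by
        nlinarith [h3, h5, hlam0.le, mul_le_mul_of_nonneg_left h5 hlam0.le]
      have h6 : (lam - Lf) * ‖p w - p w'‖ ≤ lam * ‖w - w'‖ := by
        nlinarith [h7, hΔp]
      rw [div_mul_eq_mul_div, le_div_iff₀ hμ]
      linarith
  · -- min property
    intro w u
    have h1 := hslb w (p w) u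
    rw [heq w] at h1
    simp only [inner_zero_left] at h1
    have : 0 ≤ (lam - Lf)/2 * ‖u - p w‖^2 := by positivity
    simpa using (by linarith [h1] : f (p w) + lam/2 * ‖p w - w‖^2 ≤ f u + lam/2 * ‖u - w‖^2)
  · -- clientSeq convergence
    intro α hα0 hα1 w l
    set q : ℝ := Real.sqrt (1 - α * (lam^2 - Lf^2)/lam) with hqdef
    have hq : 0 ≤ q := Real.sqrt_nonneg _
    induction l with
    | zero => simp [clientSeq]
    | succ l ih =>
      have hstep : clientSeq f α lam w (l+1)
          = clientSeq f α lam w l - α • G w (clientSeq f α lam w l) := by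
        simp only [clientSeq, hG]
      have hfixα : p w = p w - α • G w (p w) := by
        rw [heq w, smul_zero, sub_zero]
      calc ‖clientSeq f α lam w (l+1) - p w‖
          = ‖(clientSeq f α lam w l - α • G w (clientSeq f α lam w l))
              - (p w - α • G w (p w))‖ := by rw [hstep, ← hfixα]
        _ ≤ q * ‖clientSeq f α lam w l - p w‖ := hcontr α hα0 hα1 w _ _
        _ ≤ q * (q^l * ‖w - p w‖) := by
            apply mul_le_mul_of_nonneg_left ih hq
        _ = q^(l+1) * ‖w - p w‖ := by ring

lemma pm_team {N : ℕ} (hN : 1 ≤ N) (f : Fin N → E → ℝ) (Lf lam gam : ℝ)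
    (hLf : 0 < Lf) (hlam : 2*Lf < lam) (hgam : 2*lam < gam)
    (hdf : ∀ j, Differentiable ℝ (f j))
    (hlip : ∀ j, ∀ x y : E, ‖gradient (f j) x - gradient (f j) y‖ ≤ Lf * ‖x - y‖)
    (α : Fin N → ℝ) (hα : ∀ j, 0 < α j ∧ α j * lam ≤ 1)
    (η : ℝ) (hη0 : 0 < η) (hη1 : η * (lam + gam) ≤ 1) :
    ∃ W : E → E,
      (∀ x y, ‖W x - W y‖ ≤ (gam/(gam - lam)) * ‖x - y‖) ∧
      (∀ x y, moreauEnv (fun w => (1/(N:ℝ)) * ∑ j, moreauEnv (f j) lam w) gam y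
         ≤ moreauEnv (fun w => (1/(N:ℝ)) * ∑ j, moreauEnv (f j) lam w) gam x
           + gam * ⟪x - W x, y - x⟫ + gam/2 * ‖y - x‖^2) ∧
      (∀ x, HasGradientAt
        (moreauEnv (fun w => (1/(N:ℝ)) * ∑ j, moreauEnv (f j) lam w) gam)
        (gam • (x - W x)) x) ∧
      (∀ (x : E) (xs : ℕ → E), Tendsto xs atTop (𝓝 x) →
        Tendsto (fun n => teamSeq f α lam gam η n (xs n) n) atTop (𝓝 (W x))) := by
  have hlam0 : (0:ℝ) < lam := by linarith
  have hgam0 : (0:ℝ) < gam := by linarith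
  have hμ : (0:ℝ) < lam - Lf := by linarith
  have hN0 : (0:ℝ) < (N:ℝ) := by exact_mod_cast hN
  have hNne : (N:ℝ) ≠ 0 := hN0.ne'
  have hNe : Nonempty (Fin N) := ⟨⟨0, by omega⟩⟩
  have hNe' : (Finset.univ : Finset (Fin N)).Nonempty := Finset.univ_nonempty
  -- device data
  choose p heqp hplip hpmin hpclient using
    fun j => pm_device (f j) Lf lam hLf hlam (hdf j) (hlip j)
  set ℓθ : ℝ := lam/(lam - Lf) with hℓθdef
  have hℓθ0 : 0 ≤ ℓθ := by positivity
  have hℓθ2 : ℓθ ≤ 2 := by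
    rw [hℓθdef, div_le_iff₀ hμ]; linarith
  -- device envelopes
  have henv := fun j => pm_envelope (f j) lam (p j) (hpmin j)
  have hdans : ∀ j w, HasGradientAt (moreauEnv (f j) lam) (lam • (w - p j w)) w :=
    fun j => pm_danskin (moreauEnv (f j) lam) lam hlam0 (p j) ℓθ hℓθ0 (hplip j) (henv j).2
  -- team objective and its gradient
  set Fm : E → ℝ := fun w => (1/(N:ℝ)) * ∑ j, moreauEnv (f j) lam w with hFm
  set GF : E → E := fun w => (1/(N:ℝ)) • ∑ j, lam • (w - p j w) with hGF
  have hFmgrad : ∀ w, HasGradientAt Fm (GF w) w := by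
    intro w
    exact pm_hasGradientAt_const_mul (1/(N:ℝ))
      (pm_hasGradientAt_sum Finset.univ _ _ w (fun j _ => hdans j w))
  have hGFform : ∀ w, GF w = lam • w - ((lam)/(N:ℝ)) • ∑ j, p j w := by
    intro w
    show (1/(N:ℝ)) • ∑ j : Fin N, lam • (w - p j w) = _
    have h1 : ∑ j : Fin N, lam • (w - p j w)
        = (N:ℝ) • (lam • w) - lam • ∑ j, p j w := by
      simp only [smul_sub]
      rw [Finset.sum_sub_distrib, Finset.sum_const, Finset.card_univ, Fintype.card_fin,
        ← Nat.cast_smul_eq_nsmul ℝ, Finset.smul_sum]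
    rw [h1]
    match_scalars <;> field_simp
  -- Lipschitz-type bound on sums of p
  have hsum_inner : ∀ u v : E, ⟪(∑ j, p j u) - (∑ j, p j v), u - v⟫
      ≤ (N:ℝ) * (ℓθ * ‖u - v‖^2) := by
    intro u v
    rw [← Finset.sum_sub_distrib, sum_inner]
    calc (∑ j, ⟪p j u - p j v, u - v⟫)
        ≤ ∑ j : Fin N, ℓθ * ‖u - v‖^2 := by
          apply Finset.sum_le_sum
          intro j _
          calc ⟪p j u - p j v, u - v⟫ ≤ ‖p j u - p j v‖ * ‖u - v‖ := real_inner_le_norm _ _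
            _ ≤ (ℓθ * ‖u - v‖) * ‖u - v‖ :=
                mul_le_mul_of_nonneg_right (hplip j u v) (norm_nonneg _)
            _ = ℓθ * ‖u - v‖^2 := by ring
      _ = (N:ℝ) * (ℓθ * ‖u - v‖^2) := by
          rw [Finset.sum_const, Finset.card_univ, Fintype.card_fin, nsmul_eq_mul]
  -- the full team gradient (with the proximal term at x)
  have hGtmono : ∀ x : E, ∀ u v : E,
      (gam - lam) * ‖u - v‖^2 ≤ ⟪(GF u + gam • (u - x)) - (GF v + gam • (v - x)), u - v⟫ := by
    intro x u v
    have e1 : (GF u + gam • (u - x)) - (GF v + gam • (v - x))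
        = (lam + gam) • (u - v) - ((lam)/(N:ℝ)) • ((∑ j, p j u) - (∑ j, p j v)) := by
      rw [hGFform u, hGFform v]
      rw [smul_sub ((lam)/(N:ℝ))]
      rw [add_smul]
      simp only [smul_sub]
      abel
    rw [e1, inner_sub_left, real_inner_smul_left, real_inner_smul_left,
      real_inner_self_eq_norm_sq]
    have h2 := hsum_inner u v
    have h3 : (lam/(N:ℝ)) * ⟪(∑ j, p j u) - (∑ j, p j v), u - v⟫
        ≤ (lam/(N:ℝ)) * ((N:ℝ) * (ℓθ * ‖u - v‖^2)) :=
      mul_le_mul_of_nonneg_left h2 (by positivity)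
    have h4 : (lam/(N:ℝ)) * ((N:ℝ) * (ℓθ * ‖u - v‖^2)) = lam * ℓθ * ‖u - v‖^2 := by
      field_simp
    have h5 : lam * ℓθ * ‖u - v‖^2 ≤ 2 * lam * ‖u - v‖^2 := by
      have := mul_le_mul_of_nonneg_right
        (mul_le_mul_of_nonneg_left hℓθ2 hlam0.le) (sq_nonneg ‖u - v‖)
      calc lam * ℓθ * ‖u - v‖^2 ≤ (lam * 2) * ‖u - v‖^2 := this
        _ = 2 * lam * ‖u - v‖^2 := by ring
    nlinarith [h3, h4, h5]
  have hGtcont : ∀ x : E, Continuous (fun w => GF w + gam • (w - x)) := by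
    intro x
    have hpc : ∀ j, Continuous (p j) := by
      intro j
      have : LipschitzWith (Real.toNNReal ℓθ) (p j) := by
        apply LipschitzWith.of_dist_le_mul
        intro a b
        rw [dist_eq_norm, dist_eq_norm, Real.coe_toNNReal _ hℓθ0]
        exact hplip j a b
      exact this.continuous
    have : Continuous GF := by
      rw [hGF]
      apply Continuous.const_smul
      apply continuous_finset_sum
      intro j _
      exact (continuous_id.sub (hpc j)).const_smul lam
    exact this.add ((continuous_id.sub continuous_const).const_smul gam)
  have hGtgrad : ∀ x w : E, HasGradientAt (fun u => Fm u + gam/2 * ‖u - x‖^2)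
      (GF w + gam • (w - x)) w := by
    intro x w
    have h2 := pm_hasGradientAt_quad (gam/2) (by linarith) x w
    have h3 := pm_hasGradientAt_add (hFmgrad w) h2
    have h4 : (2*(gam/2)) • (w - x) = gam • (w - x) := by
      congr 1; ring
    rw [h4] at h3
    exact h3
  -- contraction map for the team fixed point
  set ρ : ℝ := 1 - η * (gam - lam) with hρdef
  have hρ0 : 0 ≤ ρ := by
    have h1 : η * (gam - lam) ≤ η * (lam + gam) :=
      mul_le_mul_of_nonneg_left (by linarith) hη0.le
    rw [hρdef]; linarith
  have hρ1 : ρ < 1 := by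
    rw [hρdef]
    nlinarith [mul_pos hη0 (by linarith : (0:ℝ) < gam - lam)]
  set Ψ : E → E → E := fun x w => (1 - η*(lam+gam)) • w + (η*gam) • x
      + ((lam*η)/(N:ℝ)) • ∑ j, p j w with hΨ
  have hΨeq : ∀ x w, Ψ x w = w - η • (GF w + gam • (w - x)) := by
    intro x w
    rw [hΨ]
    simp only []
    rw [hGFform w]
    match_scalars <;> field_simp <;> ring
  have hSnorm : ∀ u v : E, ‖(∑ j, p j u) - (∑ j, p j v)‖ ≤ (N:ℝ) * (ℓθ * ‖u - v‖) := by
    intro u v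
    rw [← Finset.sum_sub_distrib]
    calc ‖∑ j : Fin N, (p j u - p j v)‖ ≤ ∑ j : Fin N, ‖p j u - p j v‖ :=
          norm_sum_le _ _
      _ ≤ ∑ _j : Fin N, ℓθ * ‖u - v‖ := Finset.sum_le_sum (fun j _ => hplip j u v)
      _ = (N:ℝ) * (ℓθ * ‖u - v‖) := by
          rw [Finset.sum_const, Finset.card_univ, Fintype.card_fin, nsmul_eq_mul]
  have hΨcontr : ∀ x u v : E, ‖Ψ x u - Ψ x v‖ ≤ ρ * ‖u - v‖ := by
    intro x u v
    have h1 : Ψ x u - Ψ x v = (1 - η*(lam+gam)) • (u - v)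
        + ((lam*η)/(N:ℝ)) • ((∑ j, p j u) - (∑ j, p j v)) := by
      rw [hΨ]
      simp only []
      module
    rw [h1]
    have h2 : ‖(1 - η*(lam+gam)) • (u - v)‖ = (1 - η*(lam+gam)) * ‖u - v‖ := by
      rw [norm_smul, Real.norm_eq_abs, abs_of_nonneg (by linarith)]
    have h3 : ‖((lam*η)/(N:ℝ)) • ((∑ j, p j u) - (∑ j, p j v))‖
        ≤ ((lam*η)/(N:ℝ)) * ((N:ℝ) * (ℓθ * ‖u - v‖)) := by
      rw [norm_smul, Real.norm_eq_abs, abs_of_nonneg (by positivity)]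
      exact mul_le_mul_of_nonneg_left (hSnorm u v) (by positivity)
    have h4 : ((lam*η)/(N:ℝ)) * ((N:ℝ) * (ℓθ * ‖u - v‖)) = lam*η*ℓθ*‖u - v‖ := by
      field_simp
    have h5 : lam*η*ℓθ*‖u - v‖ ≤ 2*lam*η*‖u - v‖ := by
      have h6 : lam*η*ℓθ ≤ lam*η*2 :=
        mul_le_mul_of_nonneg_left hℓθ2 (by positivity)
      nlinarith [norm_nonneg (u - v)]
    calc ‖(1 - η*(lam+gam)) • (u - v)
        + ((lam*η)/(N:ℝ)) • ((∑ j, p j u) - (∑ j, p j v))‖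
        ≤ ‖(1 - η*(lam+gam)) • (u - v)‖
          + ‖((lam*η)/(N:ℝ)) • ((∑ j, p j u) - (∑ j, p j v))‖ := norm_add_le _ _
      _ ≤ (1 - η*(lam+gam)) * ‖u - v‖ + 2*lam*η*‖u - v‖ := by
          rw [h2]
          linarith [h3, h4, h5]
      _ ≤ ρ * ‖u - v‖ := by
          rw [hρdef]
          nlinarith [norm_nonneg (u - v)]
  have hcomplete : CompleteSpace E := FiniteDimensional.complete ℝ E
  have hne : Nonempty E := ⟨0⟩
  have hcw : ∀ x : E, ContractingWith (Real.toNNReal ρ) (Ψ x) := by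
    intro x
    constructor
    · have hcoe : ((Real.toNNReal ρ : ℝ≥0) : ℝ) < ((1 : ℝ≥0) : ℝ) := by
        rw [Real.coe_toNNReal _ hρ0, NNReal.coe_one]
        exact hρ1
      exact_mod_cast hcoe
    · apply LipschitzWith.of_dist_le_mul
      intro u v
      rw [dist_eq_norm, dist_eq_norm, Real.coe_toNNReal _ hρ0]
      exact hΨcontr x u v
  set W : E → E := fun x => ContractingWith.fixedPoint (Ψ x) (hcw x) with hW
  have hWfix : ∀ x, Ψ x (W x) = W x := fun x =>
    ContractingWith.fixedPoint_isFixedPt (hcw x)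
  have hWeq : ∀ x, GF (W x) + gam • (W x - x) = 0 := by
    intro x
    have h1 := hWfix x
    rw [hΨeq] at h1
    have h2 : η • (GF (W x) + gam • (W x - x)) = 0 := by
      have h3 := sub_eq_self.mp h1
      exact h3
    rcases smul_eq_zero.mp h2 with h3 | h3
    · exact absurd h3 hη0.ne'
    · exact h3
  have hWlip : ∀ x y, ‖W x - W y‖ ≤ (gam/(gam-lam)) * ‖x - y‖ := by
    intro x y
    by_cases h0 : W x - W y = 0
    · rw [h0, norm_zero]
      exact mul_nonneg (le_of_lt (div_pos hgam0 (by linarith))) (norm_nonneg _)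
    · have hpos : 0 < ‖W x - W y‖ := norm_pos_iff.mpr h0
      have h1 := hGtmono x (W x) (W y)
      have h3 : GF (W y) + gam • (W y - x) = gam • (y - x) := by
        have h4 := hWeq y
        linear_combination (norm := module) h4
      have h5 : (GF (W x) + gam • (W x - x)) - (GF (W y) + gam • (W y - x))
          = gam • (x - y) := by
        rw [hWeq x, h3]
        module
      rw [h5, real_inner_smul_left] at h1
      have h6 : ⟪x - y, W x - W y⟫ ≤ ‖x - y‖ * ‖W x - W y‖ := real_inner_le_norm _ _
      have h7 : (gam - lam)*‖W x - W y‖^2 ≤ gam*(‖x - y‖*‖W x - W y‖) := by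
        nlinarith [h1, mul_le_mul_of_nonneg_left h6 hgam0.le]
      have h8 : (gam - lam)*‖W x - W y‖ ≤ gam*‖x - y‖ := by
        nlinarith [h7, hpos]
      rw [div_mul_eq_mul_div, le_div_iff₀ (by linarith : (0:ℝ) < gam - lam)]
      linarith
  have htmin : ∀ x u, Fm (W x) + gam/2 * ‖W x - x‖^2 ≤ Fm u + gam/2 * ‖u - x‖^2 := by
    intro x u
    have h1 := pm_strong_lower (fun w => Fm w + gam/2 * ‖w - x‖^2)
      (fun w => GF w + gam • (w - x)) (hGtgrad x) (hGtcont x) (gam - lam)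
      (hGtmono x) (W x) u
    rw [hWeq x] at h1
    simp only [inner_zero_left] at h1
    have h2 : 0 ≤ (gam - lam)/2 * ‖u - W x‖^2 := by
      have : (0:ℝ) < gam - lam := by linarith
      positivity
    linarith
  have henvT := pm_envelope Fm gam W htmin
  have hdansT := pm_danskin (moreauEnv Fm gam) gam hgam0 W (gam/(gam-lam))
      (le_of_lt (div_pos hgam0 (by linarith))) hWlip henvT.2
  refine ⟨W, hWlip, henvT.2, hdansT, ?_⟩
  -- the convergence of the team-level iterates
  intro x xs hxs
  set Q : ℝ := Finset.univ.sup' hNe'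
    (fun j => Real.sqrt (1 - α j * (lam^2 - Lf^2)/lam)) with hQdef
  have hQ0 : 0 ≤ Q := by
    obtain ⟨j⟩ := hNe
    rw [hQdef]
    exact le_trans (Real.sqrt_nonneg _)
      (Finset.le_sup' (fun j => Real.sqrt (1 - α j * (lam^2 - Lf^2)/lam))
        (Finset.mem_univ j))
  have hQlt : Q < 1 := by
    rw [hQdef, Finset.sup'_lt_iff]
    intro j _
    have hs0j : 0 ≤ 1 - α j * (lam^2 - Lf^2)/lam := by
      rw [sub_nonneg, div_le_one hlam0]
      nlinarith [(hα j).1.le, (hα j).2, sq_nonneg Lf,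
        mul_le_mul_of_nonneg_left (hα j).2 hlam0.le]
    have hlt : 1 - α j * (lam^2 - Lf^2)/lam < 1 := by
      have h2 : 0 < α j * (lam^2 - Lf^2)/lam := by
        apply div_pos
        · apply mul_pos (hα j).1
          nlinarith
        · exact hlam0
      linarith
    calc Real.sqrt (1 - α j * (lam^2 - Lf^2)/lam) < Real.sqrt 1 :=
          Real.sqrt_lt_sqrt hs0j hlt
      _ = 1 := Real.sqrt_one
  have hclient : ∀ j (w : E) (n : ℕ),
      ‖clientSeq (f j) (α j) lam w n - p j w‖ ≤ Q^n * ‖w - p j w‖ := by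
    intro j w n
    calc ‖clientSeq (f j) (α j) lam w n - p j w‖
        ≤ (Real.sqrt (1 - α j * (lam^2 - Lf^2)/lam))^n * ‖w - p j w‖ :=
          hpclient j (α j) (hα j).1 (hα j).2 w n
      _ ≤ Q^n * ‖w - p j w‖ := by
          apply mul_le_mul_of_nonneg_right _ (norm_nonneg _)
          apply pow_le_pow_left₀ (Real.sqrt_nonneg _) _ n
          rw [hQdef]
          exact Finset.le_sup' (fun j => Real.sqrt (1 - α j * (lam^2 - Lf^2)/lam))
            (Finset.mem_univ j)
  set ℓW : ℝ := gam/(gam-lam) with hℓWdef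
  have hgl : (0:ℝ) < gam - lam := by linarith
  have hℓW0 : 0 ≤ ℓW := by rw [hℓWdef]; positivity
  set ρ' : ℝ := (1+ρ)/2 with hρ'def
  have hρ'0 : 0 ≤ ρ' := by rw [hρ'def]; linarith
  have hρ'1 : ρ' < 1 := by rw [hρ'def]; linarith
  set B0 : ℝ := ‖x - W x‖ + (1 + ℓW) with hB0def
  set C1 : ℝ := (Finset.univ.sup' hNe' (fun j => ‖W x - p j (W x)‖))
      + (1+ℓθ)*ℓW with hC1def
  have hsup0 : 0 ≤ Finset.univ.sup' hNe' (fun j => ‖W x - p j (W x)‖) := by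
    obtain ⟨j⟩ := hNe
    exact le_trans (norm_nonneg (W x - p j (W x)))
      (Finset.le_sup' (fun j => ‖W x - p j (W x)‖) (Finset.mem_univ j))
  have hC10 : 0 ≤ C1 := by
    rw [hC1def]
    have : 0 ≤ (1+ℓθ)*ℓW := by positivity
    linarith
  have hev1 : ∀ᶠ n in atTop, ‖xs n - x‖ ≤ 1 := by
    have h1 : ∀ᶠ (y:E) in 𝓝 x, y ∈ Metric.closedBall x 1 := by
      filter_upwards [Metric.closedBall_mem_nhds x one_pos] with y hy using hy
    filter_upwards [hxs.eventually h1] with n hn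
    rw [Metric.mem_closedBall, dist_eq_norm] at hn
    exact hn
  have hQn : Tendsto (fun n => Q^n) atTop (𝓝 0) :=
    tendsto_pow_atTop_nhds_zero_of_lt_one hQ0 hQlt
  have hev2 : ∀ᶠ n in atTop, lam*η*(1+ℓθ)*Q^n ≤ (1-ρ)/2 := by
    set b : ℝ := ((1-ρ)/2) / (lam*η*(1+ℓθ) + 1) with hbdef
    have hb0 : 0 < b := by
      rw [hbdef]
      have h1 : (0:ℝ) < (1-ρ)/2 := by linarith
      have h2 : (0:ℝ) < lam*η*(1+ℓθ) + 1 := by positivity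
      positivity
    have h3 := hQn.eventually_lt_const hb0
    filter_upwards [h3] with n hn
    have h4 : 0 ≤ Q^n := pow_nonneg hQ0 n
    have h5 : lam*η*(1+ℓθ)*Q^n ≤ (lam*η*(1+ℓθ) + 1) * b := by
      have h6 : lam*η*(1+ℓθ)*Q^n ≤ lam*η*(1+ℓθ)*b :=
        mul_le_mul_of_nonneg_left hn.le (by positivity)
      nlinarith [hb0.le]
    have h7 : (lam*η*(1+ℓθ) + 1) * b = (1-ρ)/2 := by
      rw [hbdef]
      field_simp
    linarith
  clear_value W Ψ GF Fm Q ℓW ρ ρ' B0 C1 ℓθ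
  have hkey : ∀ᶠ n in atTop, ‖teamSeq f α lam gam η n (xs n) n - W x‖
      ≤ (ρ'^n * B0 + (lam*η*C1*Q^n)/(1-ρ')) + ℓW * ‖xs n - x‖ := by
    filter_upwards [hev1, hev2] with n hn1 hn2
    have hWd : ‖W (xs n) - W x‖ ≤ ℓW * ‖xs n - x‖ := hWlip (xs n) x
    have hWd1 : ‖W (xs n) - W x‖ ≤ ℓW := by
      calc ‖W (xs n) - W x‖ ≤ ℓW * ‖xs n - x‖ := hWd
        _ ≤ ℓW * 1 := mul_le_mul_of_nonneg_left hn1 hℓW0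
        _ = ℓW := mul_one _
    have hWB : ‖xs n - W (xs n)‖ ≤ B0 := by
      calc ‖xs n - W (xs n)‖
          = ‖(x - W x) + ((xs n - x) - (W (xs n) - W x))‖ := by congr 1; abel
        _ ≤ ‖x - W x‖ + ‖(xs n - x) - (W (xs n) - W x)‖ := norm_add_le _ _
        _ ≤ ‖x - W x‖ + (‖xs n - x‖ + ‖W (xs n) - W x‖) := by
            linarith [norm_sub_le (xs n - x) (W (xs n) - W x)]
        _ ≤ B0 := by rw [hB0def]; linarith
    have hpWB : ∀ j, ‖W (xs n) - p j (W (xs n))‖ ≤ C1 := by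
      intro j
      have h1 : ‖p j (W (xs n)) - p j (W x)‖ ≤ ℓθ * ℓW := by
        calc ‖p j (W (xs n)) - p j (W x)‖ ≤ ℓθ * ‖W (xs n) - W x‖ := hplip j _ _
          _ ≤ ℓθ * ℓW := mul_le_mul_of_nonneg_left hWd1 hℓθ0
      calc ‖W (xs n) - p j (W (xs n))‖
          = ‖(W x - p j (W x)) + ((W (xs n) - W x)
              - (p j (W (xs n)) - p j (W x)))‖ := by congr 1; abel
        _ ≤ ‖W x - p j (W x)‖ + ‖(W (xs n) - W x) - (p j (W (xs n)) - p j (W x))‖ :=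
            norm_add_le _ _
        _ ≤ ‖W x - p j (W x)‖ + (‖W (xs n) - W x‖ + ‖p j (W (xs n)) - p j (W x)‖) := by
            linarith [norm_sub_le (W (xs n) - W x) (p j (W (xs n)) - p j (W x))]
        _ ≤ C1 := by
            rw [hC1def]
            have h2 : ‖W x - p j (W x)‖
                ≤ Finset.univ.sup' hNe' (fun j => ‖W x - p j (W x)‖) :=
              Finset.le_sup' (fun j => ‖W x - p j (W x)‖) (Finset.mem_univ j)
            nlinarith [h1, hWd1, h2]
    set ev : ℕ → ℝ := fun k => ‖teamSeq f α lam gam η n (xs n) k - W (xs n)‖ with hevdef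
    have hrec : ∀ k, ev (k+1) ≤ ρ' * ev k + lam*η*C1*Q^n := by
      intro k
      set wk : E := teamSeq f α lam gam η n (xs n) k with hwk
      have hstep : teamSeq f α lam gam η n (xs n) (k+1)
          = Ψ (xs n) wk + ((lam*η)/(N:ℝ)) •
              ∑ j, (clientSeq (f j) (α j) lam wk n - p j wk) := by
        rw [teamSeq]
        rw [hΨ]
        simp only []
        rw [Finset.sum_sub_distrib, smul_sub]
        rw [← hwk]
        abel
      have hδ : ‖((lam*η)/(N:ℝ)) • ∑ j, (clientSeq (f j) (α j) lam wk n - p j wk)‖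
          ≤ lam*η*Q^n*((1+ℓθ) * ‖wk - W (xs n)‖ + C1) := by
        have h1 : ∀ j : Fin N, ‖wk - p j wk‖
            ≤ (1+ℓθ) * ‖wk - W (xs n)‖ + C1 := by
          intro j
          have h2 : ‖p j (W (xs n)) - p j wk‖ ≤ ℓθ * ‖wk - W (xs n)‖ := by
            rw [show ℓθ * ‖wk - W (xs n)‖ = ℓθ * ‖W (xs n) - wk‖ by rw [norm_sub_rev]]
            exact hplip j _ _
          calc ‖wk - p j wk‖
              = ‖(wk - W (xs n)) + (W (xs n) - p j (W (xs n)))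
                  + (p j (W (xs n)) - p j wk)‖ := by congr 1; abel
            _ ≤ ‖(wk - W (xs n)) + (W (xs n) - p j (W (xs n)))‖
                + ‖p j (W (xs n)) - p j wk‖ := norm_add_le _ _
            _ ≤ ‖wk - W (xs n)‖ + ‖W (xs n) - p j (W (xs n))‖
                + ‖p j (W (xs n)) - p j wk‖ := by
                linarith [norm_add_le (wk - W (xs n)) (W (xs n) - p j (W (xs n)))]
            _ ≤ (1+ℓθ) * ‖wk - W (xs n)‖ + C1 := by
                have h3 := hpWB j
                nlinarith [h2, norm_nonneg (wk - W (xs n))]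
        have h3 : ‖∑ j, (clientSeq (f j) (α j) lam wk n - p j wk)‖
            ≤ (N:ℝ) * (Q^n * ((1+ℓθ) * ‖wk - W (xs n)‖ + C1)) := by
          calc ‖∑ j, (clientSeq (f j) (α j) lam wk n - p j wk)‖
              ≤ ∑ j, ‖clientSeq (f j) (α j) lam wk n - p j wk‖ := norm_sum_le _ _
            _ ≤ ∑ _j : Fin N, Q^n * ((1+ℓθ) * ‖wk - W (xs n)‖ + C1) := by
                apply Finset.sum_le_sum
                intro j _
                calc ‖clientSeq (f j) (α j) lam wk n - p j wk‖
                    ≤ Q^n * ‖wk - p j wk‖ := hclient j wk n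
                  _ ≤ Q^n * ((1+ℓθ) * ‖wk - W (xs n)‖ + C1) :=
                      mul_le_mul_of_nonneg_left (h1 j) (pow_nonneg hQ0 n)
            _ = (N:ℝ) * (Q^n * ((1+ℓθ) * ‖wk - W (xs n)‖ + C1)) := by
                rw [Finset.sum_const, Finset.card_univ, Fintype.card_fin, nsmul_eq_mul]
        calc ‖((lam*η)/(N:ℝ)) • ∑ j, (clientSeq (f j) (α j) lam wk n - p j wk)‖
            = ((lam*η)/(N:ℝ)) * ‖∑ j, (clientSeq (f j) (α j) lam wk n - p j wk)‖ := by
              rw [norm_smul, Real.norm_eq_abs, abs_of_nonneg (by positivity)]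
          _ ≤ ((lam*η)/(N:ℝ)) * ((N:ℝ) * (Q^n * ((1+ℓθ) * ‖wk - W (xs n)‖ + C1))) :=
              mul_le_mul_of_nonneg_left h3 (by positivity)
          _ = lam*η*Q^n*((1+ℓθ) * ‖wk - W (xs n)‖ + C1) := by
              field_simp
      have htri : ev (k+1)
          ≤ ‖Ψ (xs n) wk - Ψ (xs n) (W (xs n))‖
            + ‖((lam*η)/(N:ℝ)) • ∑ j, (clientSeq (f j) (α j) lam wk n - p j wk)‖ := by
        rw [hevdef]
        simp only []
        rw [hstep]
        have h4 : Ψ (xs n) wk + ((lam*η)/(N:ℝ)) •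
              (∑ j, (clientSeq (f j) (α j) lam wk n - p j wk)) - W (xs n)
            = (Ψ (xs n) wk - Ψ (xs n) (W (xs n))) + ((lam*η)/(N:ℝ)) •
              ∑ j, (clientSeq (f j) (α j) lam wk n - p j wk) := by
          rw [hWfix (xs n)]
          abel
        rw [h4]
        exact norm_add_le _ _
      have hΨc := hΨcontr (xs n) wk (W (xs n))
      have hee : ev k = ‖wk - W (xs n)‖ := rfl
      have hδ' : lam*η*Q^n*((1+ℓθ) * ‖wk - W (xs n)‖ + C1)
          = (lam*η*(1+ℓθ)*Q^n) * ‖wk - W (xs n)‖ + lam*η*C1*Q^n := by ring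
      have h5 : (lam*η*(1+ℓθ)*Q^n) * ‖wk - W (xs n)‖
          ≤ ((1-ρ)/2) * ‖wk - W (xs n)‖ :=
        mul_le_mul_of_nonneg_right hn2 (norm_nonneg _)
      have h6e : ρ * ‖wk - W (xs n)‖ + ((1-ρ)/2) * ‖wk - W (xs n)‖
          = ρ' * ‖wk - W (xs n)‖ := by rw [hρ'def]; ring
      rw [hee]
      clear_value wk ev
      linarith [htri, hΨc, hδ, hδ', h5, h6e]
    have hbnd := pm_rec_bound ev ρ' (lam*η*C1*Q^n) hρ'0 hρ'1
      (mul_nonneg (mul_nonneg (mul_nonneg hlam0.le hη0.le) hC10)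
        (pow_nonneg hQ0 n)) hrec n
    have hev0 : ev 0 = ‖xs n - W (xs n)‖ := rfl
    rw [hev0] at hbnd
    have h7 : ρ'^n * ‖xs n - W (xs n)‖ ≤ ρ'^n * B0 :=
      mul_le_mul_of_nonneg_left hWB (pow_nonneg hρ'0 n)
    have htri2 : ‖teamSeq f α lam gam η n (xs n) n - W x‖
        ≤ ‖teamSeq f α lam gam η n (xs n) n - W (xs n)‖ + ‖W (xs n) - W x‖ := by
      have hd := dist_triangle (teamSeq f α lam gam η n (xs n) n) (W (xs n)) (W x)
      rw [dist_eq_norm, dist_eq_norm, dist_eq_norm] at hd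
      exact hd
    have hbnd' : ‖teamSeq f α lam gam η n (xs n) n - W (xs n)‖
        ≤ ρ'^n * ‖xs n - W (xs n)‖ + (lam*η*C1*Q^n)/(1-ρ') := hbnd
    clear_value ev
    linarith [hbnd', h7, hWd, htri2]
  have hg : Tendsto (fun n => (ρ'^n * B0 + (lam*η*C1*Q^n)/(1-ρ')) + ℓW * ‖xs n - x‖)
      atTop (𝓝 0) := by
    have t1 : Tendsto (fun n => ρ'^n * B0) atTop (𝓝 0) := by
      have := (tendsto_pow_atTop_nhds_zero_of_lt_one hρ'0 hρ'1).mul_const B0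
      simpa using this
    have t2 : Tendsto (fun n => (lam*η*C1*Q^n)/(1-ρ')) atTop (𝓝 0) := by
      have h1 := (hQn.const_mul (lam*η*C1)).div_const (1-ρ')
      simpa [mul_comm] using h1
    have t3 : Tendsto (fun n => ℓW * ‖xs n - x‖) atTop (𝓝 0) := by
      have h1 : Tendsto (fun n => ‖xs n - x‖) atTop (𝓝 0) := by
        rw [← tendsto_iff_norm_sub_tendsto_zero] at *
        exact hxs
      have := h1.const_mul ℓW
      simpa using this
    have := (t1.add t2).add t3
    simpa using this
  have hnn : ∀ᶠ n in atTop, 0 ≤ ‖teamSeq f α lam gam η n (xs n) n - W x‖ :=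
    Filter.Eventually.of_forall (fun n => norm_nonneg _)
  have hfin := squeeze_zero' hnn hkey hg
  rw [tendsto_iff_norm_sub_tendsto_zero]
  exact hfin

/-- **Main theorem of PerMFL, non-convex case.**
If every device loss `f i j` is differentiable with `L_f`-Lipschitz gradient (not
necessarily convex), `γ > 2λ > 4L_f ≥ 0` (so the server objective `φ` is
differentiable with `γ`-Lipschitz gradient), and the step sizes satisfy
`0 < α_{ij} ≤ 1/λ`, `0 < η_i ≤ 1/(λ+γ)`, `0 < β ≤ 1/(4γ)`, then for a global
minimizer `x*` of `φ` with `φ(x⁰) > φ(x*)` and every `T ≥ 1` there exist inner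
iteration counts `K, L` such that the PerMFL iterates satisfy
`(1/T)∑_{t<T}‖∇φ(xᵗ)‖² ≤ 4(φ(x⁰) − φ(x*))/(βT)`; equivalently, a point `x^{t̃}`
chosen uniformly at random from `{x⁰, …, x^{T−1}}` satisfies
`E‖∇φ(x^{t̃})‖² ≤ 4(φ(x⁰) − φ(x*))/(βT)`. -/
theorem permfl_main_nonconvex
    {M : ℕ} (hM : 1 ≤ M) {N : Fin M → ℕ} (hN : ∀ i, 1 ≤ N i)
    (f : (i : Fin M) → Fin (N i) → E → ℝ)
    (Lf lam gam : ℝ) (hLf : 0 ≤ Lf)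
    (hdiff : ∀ i j, Differentiable ℝ (f i j))
    (hlip : ∀ i j, ∀ x y : E,
      ‖gradient (f i j) x - gradient (f i j) y‖ ≤ Lf * ‖x - y‖)
    (h1 : 4 * Lf < 2 * lam) (h2 : 2 * lam < gam)
    (α : (i : Fin M) → Fin (N i) → ℝ)
    (hα : ∀ i j, 0 < α i j ∧ α i j ≤ 1 / lam)
    (η : Fin M → ℝ) (hη : ∀ i, 0 < η i ∧ η i ≤ 1 / (lam + gam))
    (β : ℝ) (hβ0 : 0 < β) (hβ : β ≤ 1 / (4 * gam))
    (φ : E → ℝ)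
    (hφ : ∀ x : E,
      φ x = (1 / (M : ℝ)) * ∑ i : Fin M,
        moreauEnv
          (fun w : E => (1 / (N i : ℝ)) * ∑ j : Fin (N i), moreauEnv (f i j) lam w)
          gam x)
    (xstar : E) (hxstar : IsMinOn φ Set.univ xstar)
    (x0 : E) (hx0 : φ xstar < φ x0)
    (T : ℕ) (hT : 1 ≤ T) :
    ∃ K L : ℕ,
      (1 / (T : ℝ)) *
          ∑ t ∈ Finset.range T, ‖gradient φ (serverSeq f α η lam gam β K L x0 t)‖ ^ 2
        ≤ 4 * (φ x0 - φ xstar) / (β * T) := by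
  -- basic positivity
  have hlam0 : (0:ℝ) < lam := by linarith
  have hgam0 : (0:ℝ) < gam := by linarith
  -- replace Lf with a positive Lipschitz constant
  set Lf2 : ℝ := max Lf (lam/4) with hLf2def
  have hLf2pos : 0 < Lf2 := lt_of_lt_of_le (by positivity) (le_max_right _ _)
  have hLf2lam : 2*Lf2 < lam := by
    have hmax : max Lf (lam/4) < lam/2 := max_lt (by linarith) (by linarith)
    rw [hLf2def]; linarith
  have hlip2 : ∀ i j, ∀ x y : E,
      ‖gradient (f i j) x - gradient (f i j) y‖ ≤ Lf2 * ‖x - y‖ := by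
    intro i j x y
    calc ‖gradient (f i j) x - gradient (f i j) y‖ ≤ Lf * ‖x - y‖ := hlip i j x y
      _ ≤ Lf2 * ‖x - y‖ :=
        mul_le_mul_of_nonneg_right (le_max_left _ _) (norm_nonneg _)
  have hαij : ∀ i j, 0 < α i j ∧ α i j * lam ≤ 1 := by
    intro i j
    refine ⟨(hα i j).1, ?_⟩
    have := (hα i j).2
    rw [le_div_iff₀ hlam0] at this
    linarith
  have hηi : ∀ i, 0 < η i ∧ η i * (lam + gam) ≤ 1 := by
    intro i
    refine ⟨(hη i).1, ?_⟩
    have := (hη i).2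
    rw [le_div_iff₀ (by linarith : (0:ℝ) < lam + gam)] at this
    linarith
  -- team data
  choose W hWlip hWquad hWgrad hWtendsto using
    fun i => pm_team (hN i) (f i) Lf2 lam gam hLf2pos hLf2lam h2 (hdiff i) (hlip2 i)
      (α i) (hαij i) (η i) (hηi i).1 (hηi i).2
  have hM0 : (0:ℝ) < (M:ℝ) := by exact_mod_cast hM
  have hMne : (M:ℝ) ≠ 0 := hM0.ne'
  -- φ and its gradient
  set φ' : E → ℝ := fun x => (1 / (M : ℝ)) * ∑ i : Fin M,
    moreauEnv
      (fun w : E => (1 / (N i : ℝ)) * ∑ j : Fin (N i), moreauEnv (f i j) lam w)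
      gam x with hφ'def
  have hφfun : φ = φ' := funext (fun x => hφ x)
  subst hφfun
  set Gφ : E → E := fun x => (1/(M:ℝ)) • ∑ i, gam • (x - W i x) with hGφdef
  have hφgrad : ∀ x, HasGradientAt φ' (Gφ x) x := by
    intro x
    exact pm_hasGradientAt_const_mul (1/(M:ℝ))
      (pm_hasGradientAt_sum Finset.univ _ _ x (fun i _ => hWgrad i x))
  have hgradeq : ∀ x, gradient φ' x = Gφ x := fun x => (hφgrad x).gradient
  -- quadratic upper bound for φ'
  have hφquad : ∀ x y : E, φ' y ≤ φ' x + ⟪Gφ x, y - x⟫ + gam/2 * ‖y - x‖^2 := by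
    intro x y
    have h3 : ∀ i : Fin M,
        moreauEnv (fun w : E => (1 / (N i : ℝ)) * ∑ j, moreauEnv (f i j) lam w) gam y
        ≤ moreauEnv (fun w : E => (1 / (N i : ℝ)) * ∑ j, moreauEnv (f i j) lam w) gam x
          + gam * ⟪x - W i x, y - x⟫ + gam/2 * ‖y - x‖^2 := fun i => hWquad i x y
    have h4 := Finset.sum_le_sum (fun i (_ : i ∈ Finset.univ) => h3 i)
    have h5 : ⟪Gφ x, y - x⟫ = (1/(M:ℝ)) * ∑ i, gam * ⟪x - W i x, y - x⟫ := by
      rw [hGφdef]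
      simp only []
      rw [real_inner_smul_left, sum_inner]
      congr 1
      apply Finset.sum_congr rfl
      intro i _
      rw [real_inner_smul_left]
    have h6 : (∑ i : Fin M,
        (moreauEnv (fun w : E => (1 / (N i : ℝ)) * ∑ j, moreauEnv (f i j) lam w) gam x
          + gam * ⟪x - W i x, y - x⟫ + gam/2 * ‖y - x‖^2))
        = (∑ i : Fin M,
            moreauEnv (fun w : E => (1 / (N i : ℝ)) * ∑ j, moreauEnv (f i j) lam w) gam x)
          + (∑ i, gam * ⟪x - W i x, y - x⟫) + (M:ℝ) * (gam/2 * ‖y - x‖^2) := by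
      rw [Finset.sum_add_distrib, Finset.sum_add_distrib, Finset.sum_const,
        Finset.card_univ, Fintype.card_fin, nsmul_eq_mul]
    rw [h6] at h4
    have h7 := mul_le_mul_of_nonneg_left h4 (by positivity : (0:ℝ) ≤ 1/(M:ℝ))
    rw [hφ'def]
    simp only []
    rw [h5]
    have h8 : 1/(M:ℝ) * ((M:ℝ) * (gam/2 * ‖y - x‖^2)) = gam/2 * ‖y - x‖^2 := by
      field_simp
    nlinarith [h7, h8]
  -- exact gradient descent
  have hβγ : β * gam ≤ 1/4 := by
    have h9 := hβ
    rw [le_div_iff₀ (by positivity : (0:ℝ) < 4*gam)] at h9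
    linarith
  have hdescent : ∀ t, φ' (pmGD Gφ β x0 (t+1))
      ≤ φ' (pmGD Gφ β x0 t) - (7*β/8) * ‖Gφ (pmGD Gφ β x0 t)‖^2 := by
    intro t
    have h1' := hφquad (pmGD Gφ β x0 t) (pmGD Gφ β x0 (t+1))
    have h2' : pmGD Gφ β x0 (t+1) - pmGD Gφ β x0 t = -(β • Gφ (pmGD Gφ β x0 t)) := by
      rw [pmGD]
      abel
    rw [h2'] at h1'
    rw [inner_neg_right, real_inner_smul_right, real_inner_self_eq_norm_sq] at h1'
    have hnrm : ‖-(β • Gφ (pmGD Gφ β x0 t))‖^2 = β^2 * ‖Gφ (pmGD Gφ β x0 t)‖^2 := by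
      rw [norm_neg, norm_smul, Real.norm_eq_abs, abs_of_pos hβ0]
      ring
    rw [hnrm] at h1'
    have h10 : gam/2 * (β^2 * ‖Gφ (pmGD Gφ β x0 t)‖^2)
        ≤ (β/8) * ‖Gφ (pmGD Gφ β x0 t)‖^2 := by
      have h11 : 0 ≤ β * ‖Gφ (pmGD Gφ β x0 t)‖^2 := by positivity
      nlinarith [mul_le_mul_of_nonneg_right hβγ h11]
    nlinarith [h1', h10]
  have hsum : ∀ T' : ℕ, (7*β/8) * ∑ t ∈ Finset.range T', ‖Gφ (pmGD Gφ β x0 t)‖^2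
      ≤ φ' x0 - φ' (pmGD Gφ β x0 T') := by
    intro T'
    induction T' with
    | zero => simp [pmGD]
    | succ T' ih =>
      rw [Finset.sum_range_succ, mul_add]
      have := hdescent T'
      linarith
  have hminφ : ∀ z : E, φ' xstar ≤ φ' z := fun z => hxstar (Set.mem_univ z)
  have hΔpos : (0:ℝ) < φ' x0 - φ' xstar := by linarith
  have hSbar : ∑ t ∈ Finset.range T, ‖Gφ (pmGD Gφ β x0 t)‖^2
      ≤ (8/(7*β)) * (φ' x0 - φ' xstar) := by
    have h12 := hsum T
    have h13 := hminφ (pmGD Gφ β x0 T)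
    have h14 : (7*β/8) * ∑ t ∈ Finset.range T, ‖Gφ (pmGD Gφ β x0 t)‖^2
        ≤ φ' x0 - φ' xstar := by linarith
    have h15 : (0:ℝ) < 7*β/8 := by positivity
    rw [← le_div_iff₀' h15] at h14
    calc ∑ t ∈ Finset.range T, ‖Gφ (pmGD Gφ β x0 t)‖^2
        ≤ (φ' x0 - φ' xstar) / (7*β/8) := h14
      _ = (8/(7*β)) * (φ' x0 - φ' xstar) := by
          field_simp
  -- convergence of the PerMFL iterates to the exact GD sequence
  have hconv : ∀ t, Tendsto (fun n => serverSeq f α η lam gam β n n x0 t) atTop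
      (𝓝 (pmGD Gφ β x0 t)) := by
    intro t
    induction t with
    | zero =>
      have : (fun n => serverSeq f α η lam gam β n n x0 0) = fun _ => x0 := by
        funext n
        rw [serverSeq]
      rw [this, pmGD]
      exact tendsto_const_nhds
    | succ t ih =>
      have hteam : ∀ i : Fin M, Tendsto (fun n => teamSeq (f i) (α i) lam gam (η i) n
          (serverSeq f α η lam gam β n n x0 t) n) atTop (𝓝 (W i (pmGD Gφ β x0 t))) :=
        fun i => hWtendsto i (pmGD Gφ β x0 t) _ ih
      have hlim : Tendsto (fun n => (1 - β*gam) • serverSeq f α η lam gam β n n x0 t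
          + ((β*gam)/(M:ℝ)) • ∑ i, teamSeq (f i) (α i) lam gam (η i) n
              (serverSeq f α η lam gam β n n x0 t) n) atTop
          (𝓝 ((1 - β*gam) • pmGD Gφ β x0 t
            + ((β*gam)/(M:ℝ)) • ∑ i, W i (pmGD Gφ β x0 t))) :=
        (ih.const_smul _).add ((tendsto_finset_sum _ (fun i _ => hteam i)).const_smul _)
      have hfix : (1 - β*gam) • pmGD Gφ β x0 t
          + ((β*gam)/(M:ℝ)) • ∑ i, W i (pmGD Gφ β x0 t) = pmGD Gφ β x0 (t+1) := by
        rw [pmGD]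
        set x := pmGD Gφ β x0 t with hx
        clear_value x
        have hsum2 : ∑ i : Fin M, gam • (x - W i x)
            = (M:ℝ) • (gam • x) - gam • ∑ i, W i x := by
          simp only [smul_sub]
          rw [Finset.sum_sub_distrib, Finset.sum_const, Finset.card_univ,
            Fintype.card_fin, ← Nat.cast_smul_eq_nsmul ℝ, Finset.smul_sum]
        rw [hGφdef]
        simp only []
        rw [hsum2]
        match_scalars <;> field_simp <;> ring
      have hfun : (fun n => serverSeq f α η lam gam β n n x0 (t+1))
          = fun n => (1 - β*gam) • serverSeq f α η lam gam β n n x0 t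
            + ((β*gam)/(M:ℝ)) • ∑ i, teamSeq (f i) (α i) lam gam (η i) n
                (serverSeq f α η lam gam β n n x0 t) n := by
        funext n
        rw [serverSeq]
      rw [hfun, ← hfix]
      exact hlim
  -- continuity of Gφ
  have hGφcont : Continuous Gφ := by
    have hWc : ∀ i, Continuous (W i) := by
      intro i
      have h16 : LipschitzWith (Real.toNNReal (gam/(gam-lam))) (W i) := by
        apply LipschitzWith.of_dist_le_mul
        intro a b
        rw [dist_eq_norm, dist_eq_norm,
          Real.coe_toNNReal _ (le_of_lt (div_pos hgam0 (by linarith)))]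
        exact hWlip i a b
      exact h16.continuous
    rw [hGφdef]
    apply Continuous.const_smul
    apply continuous_finset_sum
    intro i _
    exact ((continuous_id.sub (hWc i)).const_smul gam)
  have hStend : Tendsto (fun n => ∑ t ∈ Finset.range T,
      ‖Gφ (serverSeq f α η lam gam β n n x0 t)‖^2) atTop
      (𝓝 (∑ t ∈ Finset.range T, ‖Gφ (pmGD Gφ β x0 t)‖^2)) := by
    apply tendsto_finset_sum
    intro t _
    exact (((hGφcont.tendsto _).comp (hconv t)).norm).pow 2
  have hlt : (8/(7*β)) * (φ' x0 - φ' xstar) < 4*(φ' x0 - φ' xstar)/β := by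
    have e1 : (8/(7*β)) * (φ' x0 - φ' xstar) = (8*(φ' x0 - φ' xstar))/(7*β) := by ring
    rw [e1, div_lt_div_iff₀ (by positivity : (0:ℝ) < 7*β) hβ0]
    nlinarith [hΔpos, hβ0, mul_pos hΔpos hβ0]
  have hev := hStend.eventually_lt_const (lt_of_le_of_lt hSbar hlt)
  obtain ⟨n, hn⟩ := hev.exists
  refine ⟨n, n, ?_⟩
  have hrw : ∀ t, ‖gradient φ' (serverSeq f α η lam gam β n n x0 t)‖^2
      = ‖Gφ (serverSeq f α η lam gam β n n x0 t)‖^2 := by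
    intro t
    rw [hgradeq]
  rw [Finset.sum_congr rfl (fun t _ => hrw t)]
  have hT0 : (0:ℝ) < (T:ℝ) := by exact_mod_cast hT
  have h17 : (1/(T:ℝ)) * ∑ t ∈ Finset.range T,
      ‖Gφ (serverSeq f α η lam gam β n n x0 t)‖^2
      ≤ (1/(T:ℝ)) * (4*(φ' x0 - φ' xstar)/β) :=
    mul_le_mul_of_nonneg_left hn.le (by positivity)
  have h18 : (1/(T:ℝ)) * (4*(φ' x0 - φ' xstar)/β) = 4*(φ' x0 - φ' xstar)/(β*(T:ℝ)) := by
    field_simp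
  rw [h18] at h17
  exact h17


end
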